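/- arXiv:1807.11199 — 3 statements merged into one kernel-verified Lean document; each statement's English description precedes it below -/
import Mathlib

section
/- Let n ≥ 2, x ∈ ℝⁿ, b ∈ {−1,0,1}ⁿ with E_n(x;b) < +∞, and suppose there are indices I ≠ J with b_I·b_J = −1 and x_I = x_J. Let b̄ equal b except b̄_I = b̄_J = 0. Assume (V+W)(r) ≥ −C₁ r² for all r ≠ 0 and W is continuous at 0. Then E_n(x; b̄) ≤ E_n(x; b) + (C/n)(M₂(x) + x_I² + 1) for some constant C depending only on C₁ and |W(0)|. -/
open Finset

/-- The two-species interaction energy `E_n`. -/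
noncomputable def En (n : ℕ) (V W : ℝ → ℝ) (x : Fin n → ℝ) (b : Fin n → ℤ) : ℝ :=
  (1 / (2 * (n : ℝ) ^ 2)) *
    ∑ i, ((∑ j ∈ univ.filter (fun j => j ≠ i ∧ b i * b j = 1), V (x i - x j)) +
          (∑ j ∈ univ.filter (fun j => b i * b j = -1), W (x i - x j)))

/-- The second moment `M₂` of the empirical measure. -/
noncomputable def M2 (n : ℕ) (x : Fin n → ℝ) : ℝ := (1 / (n : ℝ)) * ∑ i, (x i) ^ 2

set_option maxHeartbeats 2000000 in
/-- Annihilating a colliding pair of opposite charges increases the energy at most by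
`(C/n)(M₂(x) + x_I² + 1)`. -/
theorem En_annihilation_jump (C₁ : ℝ) (hC₁ : 0 < C₁) :
    ∃ C > 0, ∀ (n : ℕ), 2 ≤ n → ∀ (x : Fin n → ℝ) (b : Fin n → ℤ)
      (V W : ℝ → ℝ) (I J : Fin n),
      (∀ i, b i = -1 ∨ b i = 0 ∨ b i = 1) →
      I ≠ J → b I * b J = -1 → x I = x J →
      (∀ r : ℝ, r ≠ 0 → -C₁ * r ^ 2 ≤ V r + W r) →
      abs (W 0) ≤ C₁ →
      (∀ i j, i ≠ j → b i * b j = 1 → x i ≠ x j) →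
      En n V W x (fun i => if i = I ∨ i = J then 0 else b i)
        ≤ En n V W x b + (C / (n : ℝ)) * (M2 n x + (x I) ^ 2 + 1) := by
  classical
  refine ⟨3 * C₁, by positivity, ?_⟩
  intro n hn x b V W I J hb hIJ hbIJ hxIJ hVW hW0 hcol
  set b' : Fin n → ℤ := fun i => if i = I ∨ i = J then 0 else b i with hb'def
  -- sign analysis
  have hsgn : (b I = 1 ∧ b J = -1) ∨ (b I = -1 ∧ b J = 1) := by
    rcases hb I with h1|h1|h1 <;> rcases hb J with h2|h2|h2 <;>
      simp [h1, h2] at hbIJ ⊢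
  have hb'I0 : b' I = 0 := by simp [hb'def]
  have hb'J0 : b' J = 0 := by simp [hb'def]
  have hb'rest : ∀ i, i ≠ I → i ≠ J → b' i = b i := by
    intro i h1 h2; simp [hb'def, h1, h2]
  -- summand function
  set T : (Fin n → ℤ) → Fin n → Fin n → ℝ := fun c i j =>
    (if j ≠ i ∧ c i * c j = 1 then V (x i - x j) else 0) +
    (if c i * c j = -1 then W (x i - x j) else 0) with hTdef
  have hEn : ∀ c, En n V W x c = (1 / (2 * (n : ℝ) ^ 2)) * ∑ i, ∑ j, T c i j := by
    intro c
    unfold En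
    congr 1
    refine Finset.sum_congr rfl fun i _ => ?_
    rw [Finset.sum_filter, Finset.sum_filter, ← Finset.sum_add_distrib]
  -- sum splitting
  set R : Finset (Fin n) := (univ.erase I).erase J with hR
  have hsplit : ∀ f : Fin n → ℝ, ∑ i, f i = f I + f J + ∑ i ∈ R, f i := by
    intro f
    rw [← Finset.add_sum_erase _ f (mem_univ I),
        ← Finset.add_sum_erase _ f (mem_erase.mpr ⟨hIJ.symm, mem_univ J⟩)]
    ring
  have hmemR : ∀ i ∈ R, i ≠ I ∧ i ≠ J := by
    intro i hi
    rw [hR, mem_erase, mem_erase] at hi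
    exact ⟨hi.2.1, hi.1⟩
  set Q : ℝ := ∑ j, (x I - x j) ^ 2 with hQ
  have hQ0 : (0:ℝ) ≤ Q := Finset.sum_nonneg fun _ _ => sq_nonneg _
  have hQR : ∀ s : Finset (Fin n), ∑ j ∈ s, (x I - x j) ^ 2 ≤ Q :=
    fun s => Finset.sum_le_sum_of_subset_of_nonneg (subset_univ s)
      (fun j _ _ => sq_nonneg _)
  have hW0' : -C₁ ≤ W 0 := (abs_le.mp hW0).1
  -- rows of b' at I and J vanish
  have hrowI0 : ∑ j, T b' I j = 0 :=
    Finset.sum_eq_zero fun j _ => by simp [hTdef, hb'I0]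
  have hrowJ0 : ∑ j, T b' J j = 0 :=
    Finset.sum_eq_zero fun j _ => by simp [hTdef, hb'J0]
  -- rows comparison for i ∈ R
  have hrest : ∀ i ∈ R, ∑ j, T b' i j ≤ (∑ j, T b i j) + C₁ * (x I - x i) ^ 2 := by
    intro i hi
    obtain ⟨hiI, hiJ⟩ := hmemR i hi
    have hbi' : b' i = b i := hb'rest i hiI hiJ
    have hkey : (∑ j, T b i j) - (∑ j, T b' i j) = T b i I + T b i J := by
      rw [hsplit (T b i), hsplit (T b' i)]
      have h1 : T b' i I = 0 := by simp [hTdef, hbi', hb'I0]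
      have h2 : T b' i J = 0 := by simp [hTdef, hbi', hb'J0]
      have h3 : ∑ j ∈ R, T b' i j = ∑ j ∈ R, T b i j :=
        Finset.sum_congr rfl fun j hj => by
          obtain ⟨hjI, hjJ⟩ := hmemR j hj
          rw [hTdef]; simp only [hbi', hb'rest j hjI hjJ]
      rw [h1, h2, h3]; ring
    have hbound : -(C₁ * (x I - x i) ^ 2) ≤ T b i I + T b i J := by
      rcases hb i with hbi | hbi | hbi
      · -- b i = -1
        rcases hsgn with ⟨hI, hJ⟩ | ⟨hI, hJ⟩
        · -- b I = 1, b J = -1 : b i * b I = -1, b i * b J = 1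
          have hxiJ : x i - x J ≠ 0 :=
            sub_ne_zero.mpr (hcol i J hiJ (by rw [hbi, hJ]; norm_num))
          have := hVW _ hxiJ
          have hTe : T b i I + T b i J = W (x i - x I) + V (x i - x J) := by
            simp [hTdef, hbi, hI, hJ, Ne.symm hiJ]
          rw [hTe, hxIJ]
          nlinarith [sq_nonneg (x J - x i)]
        · -- b I = -1, b J = 1 : b i * b I = 1, b i * b J = -1
          have hxiI : x i - x I ≠ 0 :=
            sub_ne_zero.mpr (hcol i I hiI (by rw [hbi, hI]; norm_num))
          have := hVW _ hxiI
          have hTe : T b i I + T b i J = V (x i - x I) + W (x i - x J) := by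
            simp [hTdef, hbi, hI, hJ, Ne.symm hiI]
          rw [hTe, ← hxIJ]
          nlinarith [sq_nonneg (x I - x i)]
      · -- b i = 0
        have hTe : T b i I + T b i J = 0 := by simp [hTdef, hbi]
        rw [hTe]
        nlinarith [sq_nonneg (x I - x i)]
      · -- b i = 1
        rcases hsgn with ⟨hI, hJ⟩ | ⟨hI, hJ⟩
        · have hxiI : x i - x I ≠ 0 :=
            sub_ne_zero.mpr (hcol i I hiI (by rw [hbi, hI]; norm_num))
          have := hVW _ hxiI
          have hTe : T b i I + T b i J = V (x i - x I) + W (x i - x J) := by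
            simp [hTdef, hbi, hI, hJ, Ne.symm hiI]
          rw [hTe, ← hxIJ]
          nlinarith [sq_nonneg (x I - x i)]
        · have hxiJ : x i - x J ≠ 0 :=
            sub_ne_zero.mpr (hcol i J hiJ (by rw [hbi, hJ]; norm_num))
          have := hVW _ hxiJ
          have hTe : T b i I + T b i J = W (x i - x I) + V (x i - x J) := by
            simp [hTdef, hbi, hI, hJ, Ne.symm hiJ]
          rw [hTe, hxIJ]
          nlinarith [sq_nonneg (x J - x i)]
    linarith
  -- rows of b at I and J
  have hrowsIJ : -(C₁ * Q) - 2 * C₁ ≤ (∑ j, T b I j) + (∑ j, T b J j) := by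
    rw [← Finset.sum_add_distrib, hsplit (fun j => T b I j + T b J j)]
    have hI0 : T b I I + T b J I = W 0 := by
      rcases hsgn with ⟨hI, hJ⟩ | ⟨hI, hJ⟩ <;>
        · simp [hTdef, hI, hJ, hIJ.symm, hxIJ]
    have hJ0 : T b I J + T b J J = W 0 := by
      rcases hsgn with ⟨hI, hJ⟩ | ⟨hI, hJ⟩ <;>
        · simp [hTdef, hI, hJ, hIJ, hxIJ]
    have hrest2 : ∀ j ∈ R, -(C₁ * (x I - x j) ^ 2) ≤ T b I j + T b J j := by
      intro j hj
      obtain ⟨hjI, hjJ⟩ := hmemR j hj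
      rcases hb j with hbj | hbj | hbj
      · -- b j = -1
        rcases hsgn with ⟨hI, hJ⟩ | ⟨hI, hJ⟩
        · -- b I = 1: b I * b j = -1, b J * b j = 1
          have hxJj : x J - x j ≠ 0 :=
            sub_ne_zero.mpr (hcol J j (Ne.symm hjJ) (by rw [hbj, hJ]; norm_num))
          have := hVW _ hxJj
          have hTe : T b I j + T b J j = W (x I - x j) + V (x J - x j) := by
            simp [hTdef, hbj, hI, hJ, hjI, hjJ]
          rw [hTe, hxIJ]
          nlinarith [sq_nonneg (x J - x j)]
        · -- b I = -1: b I * b j = 1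
          have hxIj : x I - x j ≠ 0 :=
            sub_ne_zero.mpr (hcol I j (Ne.symm hjI) (by rw [hbj, hI]; norm_num))
          have := hVW _ hxIj
          have hTe : T b I j + T b J j = V (x I - x j) + W (x J - x j) := by
            simp [hTdef, hbj, hI, hJ, hjI, hjJ]
          rw [hTe, ← hxIJ]
          nlinarith [sq_nonneg (x I - x j)]
      · have hTe : T b I j + T b J j = 0 := by simp [hTdef, hbj]
        rw [hTe]
        nlinarith [sq_nonneg (x I - x j)]
      · -- b j = 1
        rcases hsgn with ⟨hI, hJ⟩ | ⟨hI, hJ⟩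
        · have hxIj : x I - x j ≠ 0 :=
            sub_ne_zero.mpr (hcol I j (Ne.symm hjI) (by rw [hbj, hI]; norm_num))
          have := hVW _ hxIj
          have hTe : T b I j + T b J j = V (x I - x j) + W (x J - x j) := by
            simp [hTdef, hbj, hI, hJ, hjI, hjJ]
          rw [hTe, ← hxIJ]
          nlinarith [sq_nonneg (x I - x j)]
        · have hxJj : x J - x j ≠ 0 :=
            sub_ne_zero.mpr (hcol J j (Ne.symm hjJ) (by rw [hbj, hJ]; norm_num))
          have := hVW _ hxJj
          have hTe : T b I j + T b J j = W (x I - x j) + V (x J - x j) := by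
            simp [hTdef, hbj, hI, hJ, hjI, hjJ]
          rw [hTe, hxIJ]
          nlinarith [sq_nonneg (x J - x j)]
    have hsum2 : ∑ j ∈ R, (-(C₁ * (x I - x j) ^ 2)) ≤ ∑ j ∈ R, (T b I j + T b J j) :=
      Finset.sum_le_sum hrest2
    have hsum3 : -(C₁ * Q) ≤ ∑ j ∈ R, (-(C₁ * (x I - x j) ^ 2)) := by
      have heq : ∑ j ∈ R, (-(C₁ * (x I - x j) ^ 2)) = -(C₁ * ∑ j ∈ R, (x I - x j) ^ 2) := by
        rw [Finset.mul_sum, Finset.sum_neg_distrib]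
      rw [heq]
      have := hQR R
      nlinarith
    rw [hI0, hJ0]
    linarith
  -- assemble the key sum inequality
  have hkeysum : ∑ i, ∑ j, T b' i j ≤ (∑ i, ∑ j, T b i j) + (2 * C₁ * Q + 2 * C₁) := by
    rw [hsplit (fun i => ∑ j, T b' i j), hsplit (fun i => ∑ j, T b i j)]
    have h1 : ∑ i ∈ R, ∑ j, T b' i j ≤
        ∑ i ∈ R, ((∑ j, T b i j) + C₁ * (x I - x i) ^ 2) :=
      Finset.sum_le_sum hrest
    rw [Finset.sum_add_distrib, ← Finset.mul_sum] at h1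
    have h2 := hQR R
    have h3 : C₁ * (∑ i ∈ R, (x I - x i) ^ 2) ≤ C₁ * Q :=
      mul_le_mul_of_nonneg_left h2 hC₁.le
    rw [hrowI0, hrowJ0]
    linarith
  -- final arithmetic
  have hN : (2:ℝ) ≤ (n:ℝ) := by exact_mod_cast hn
  have hN0 : (0:ℝ) < (n:ℝ) := by linarith
  set N : ℝ := (n:ℝ) with hNdef
  set A : ℝ := ∑ j, (x j) ^ 2 with hA
  have hA0 : (0:ℝ) ≤ A := Finset.sum_nonneg fun _ _ => sq_nonneg _
  have hQle : Q ≤ 2 * A + 2 * N * (x I) ^ 2 := by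
    have h : ∀ j : Fin n, (x I - x j) ^ 2 ≤ 2 * (x j) ^ 2 + 2 * (x I) ^ 2 := by
      intro j; nlinarith [sq_nonneg (x I + x j)]
    calc Q ≤ ∑ j, (2 * (x j) ^ 2 + 2 * (x I) ^ 2) := Finset.sum_le_sum fun j _ => h j
      _ = 2 * A + 2 * N * (x I) ^ 2 := by
          rw [Finset.sum_add_distrib, ← Finset.mul_sum, Finset.sum_const, card_univ,
            Fintype.card_fin, nsmul_eq_mul]
          ring
  have hM2 : M2 n x = (1 / N) * A := rfl
  rw [hEn b', hEn b, hM2]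
  have hc : (0:ℝ) < 1 / (2 * N ^ 2) := by positivity
  have hmain : (1 / (2 * N ^ 2)) * (∑ i, ∑ j, T b' i j) ≤
      (1 / (2 * N ^ 2)) * ((∑ i, ∑ j, T b i j) + (2 * C₁ * Q + 2 * C₁)) :=
    mul_le_mul_of_nonneg_left hkeysum hc.le
  have hfin : (1 / (2 * N ^ 2)) * (2 * C₁ * Q + 2 * C₁) ≤
      3 * C₁ / N * ((1 / N) * A + (x I) ^ 2 + 1) := by
    have hN0' : N ≠ 0 := ne_of_gt hN0
    have hL : (1 / (2 * N ^ 2)) * (2 * C₁ * Q + 2 * C₁) = (C₁ * Q + C₁) / N ^ 2 := by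
      field_simp
    have hRr : 3 * C₁ / N * ((1 / N) * A + (x I) ^ 2 + 1)
        = (3 * C₁ * A + 3 * C₁ * N * (x I) ^ 2 + 3 * C₁ * N) / N ^ 2 := by
      field_simp
    rw [hL, hRr, div_le_div_iff₀ (by positivity) (by positivity)]
    nlinarith [mul_le_mul_of_nonneg_left hQle hC₁.le,
      mul_nonneg hC₁.le hA0,
      mul_nonneg (mul_nonneg hC₁.le hN0.le) (sq_nonneg (x I)),
      mul_le_mul_of_nonneg_left hN hC₁.le,
      sq_nonneg N, mul_pos hN0 hN0]
  calc (1 / (2 * N ^ 2)) * (∑ i, ∑ j, T b' i j)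
      ≤ (1 / (2 * N ^ 2)) * (∑ i, ∑ j, T b i j) +
        (1 / (2 * N ^ 2)) * (2 * C₁ * Q + 2 * C₁) := by rw [← mul_add]; exact hmain
    _ ≤ (1 / (2 * N ^ 2)) * (∑ i, ∑ j, T b i j) +
        3 * C₁ / N * ((1 / N) * A + (x I) ^ 2 + 1) := by linarith
end

section
/- Let x : [0,T] → ℝⁿ be a classical solution of the ODE system ẋ_i = −(1/n) Σ_{j : b_i b_j = 1} V'(x_i − x_j) − (1/n) Σ_{j : b_i b_j = −1} W'(x_i − x_j) with fixed charges b ∈ {−1,0,1}ⁿ, where V' and W' are odd and r·V'(r), r·W'(r) are bounded by a constant C₀. Then the second moment M₂(x(t)) = (1/n) Σ_i x_i(t)² satisfies M₂(x(t)) ≤ M₂(x(0)) + C·t for all t ∈ [0,T], with C depending only on C₀. -/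
open Finset

lemma sym_sum_bound (C₀ : ℝ) (n : ℕ) (y : Fin n → ℝ) (b : Fin n → ℤ) (g : ℝ → ℝ) (c : ℤ)
    (hodd : ∀ r, g (-r) = -g r) (hbd : ∀ r, |r * g r| ≤ C₀) :
    |∑ i, y i * ∑ j ∈ univ.filter (fun j => b i * b j = c), g (y i - y j)|
      ≤ (n : ℝ) ^ 2 * C₀ / 2 := by
  set S : Finset (Fin n × Fin n) :=
    (univ ×ˢ univ).filter (fun p => b p.1 * b p.2 = c) with hS
  have hA : (∑ i, y i * ∑ j ∈ univ.filter (fun j => b i * b j = c), g (y i - y j))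
      = ∑ p ∈ S, y p.1 * g (y p.1 - y p.2) := by
    rw [hS, Finset.sum_filter, Finset.sum_product]
    refine Finset.sum_congr rfl fun i _ => ?_
    rw [Finset.mul_sum, Finset.sum_filter]
  have hswap : ∑ p ∈ S, y p.1 * g (y p.1 - y p.2)
      = ∑ p ∈ S, y p.2 * g (y p.2 - y p.1) := by
    refine Finset.sum_equiv (Equiv.prodComm (Fin n) (Fin n)) (fun p => ?_) (fun p _ => ?_)
    · simp [hS, mul_comm]
    · rfl
  have h2 : 2 * (∑ p ∈ S, y p.1 * g (y p.1 - y p.2))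
      = ∑ p ∈ S, (y p.1 - y p.2) * g (y p.1 - y p.2) := by
    rw [two_mul]
    nth_rewrite 2 [hswap]
    rw [← Finset.sum_add_distrib]
    refine Finset.sum_congr rfl fun p _ => ?_
    have : g (y p.2 - y p.1) = - g (y p.1 - y p.2) := by
      rw [← hodd]; ring_nf
    rw [this]; ring
  have hcard : (S.card : ℝ) ≤ (n : ℝ) ^ 2 := by
    have := Finset.card_filter_le (univ ×ˢ univ : Finset (Fin n × Fin n))
      (fun p => b p.1 * b p.2 = c)
    have hc : ((univ ×ˢ univ : Finset (Fin n × Fin n))).card = n * n := by simp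
    calc (S.card : ℝ) ≤ ((n * n : ℕ) : ℝ) := by exact_mod_cast hc ▸ this
    _ = (n : ℝ) ^ 2 := by push_cast; ring
  have hbound : |∑ p ∈ S, (y p.1 - y p.2) * g (y p.1 - y p.2)| ≤ (n : ℝ) ^ 2 * C₀ := by
    calc |∑ p ∈ S, (y p.1 - y p.2) * g (y p.1 - y p.2)|
        ≤ ∑ p ∈ S, |(y p.1 - y p.2) * g (y p.1 - y p.2)| := Finset.abs_sum_le_sum_abs _ _
      _ ≤ ∑ p ∈ S, C₀ := Finset.sum_le_sum fun p _ => hbd _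
      _ = S.card * C₀ := by rw [Finset.sum_const, nsmul_eq_mul]
      _ ≤ (n : ℝ) ^ 2 * C₀ := by
          have hC : 0 ≤ C₀ := le_trans (abs_nonneg _) (hbd 0)
          exact mul_le_mul_of_nonneg_right hcard hC
  rw [hA]
  have : |2 * (∑ p ∈ S, y p.1 * g (y p.1 - y p.2))| ≤ (n : ℝ) ^ 2 * C₀ := by
    rw [h2]; exact hbound
  rw [abs_mul, abs_two] at this
  linarith [abs_nonneg (∑ p ∈ S, y p.1 * g (y p.1 - y p.2))]

/-- Second-moment bound along the particle dynamics: `M₂(x(t)) ≤ M₂(x(0)) + C·t`. -/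
theorem second_moment_bound (C₀ : ℝ) (hC₀ : 0 < C₀) :
    ∃ C > 0, ∀ (n : ℕ), 2 ≤ n → ∀ (T : ℝ), 0 < T →
      ∀ (x : ℝ → Fin n → ℝ) (b : Fin n → ℤ) (V' W' : ℝ → ℝ),
        (∀ r : ℝ, V' (-r) = -V' r) → (∀ r : ℝ, W' (-r) = -W' r) →
        (∀ r : ℝ, abs (r * V' r) ≤ C₀) → (∀ r : ℝ, abs (r * W' r) ≤ C₀) →
        (∀ t ∈ Set.Icc (0 : ℝ) T, ∀ i, HasDerivAt (fun s => x s i)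
          (-(1 / (n : ℝ)) * ∑ j ∈ univ.filter (fun j => b i * b j = 1), V' (x t i - x t j)
            - (1 / (n : ℝ)) * ∑ j ∈ univ.filter (fun j => b i * b j = -1), W' (x t i - x t j)) t) →
        ∀ t ∈ Set.Icc (0 : ℝ) T,
          (1 / (n : ℝ)) * ∑ i, (x t i) ^ 2 ≤ (1 / (n : ℝ)) * ∑ i, (x 0 i) ^ 2 + C * t := by
  refine ⟨2 * C₀, by linarith, ?_⟩
  intro n hn T hT x b V' W' hVodd hWodd hVbd hWbd hx t ht
  have hn0 : (0 : ℝ) < (n : ℝ) := by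
    have : (0 : ℕ) < n := by omega
    exact_mod_cast this
  -- the candidate derivative of the second moment
  set v : ℝ → Fin n → ℝ := fun s i =>
    -(1 / (n : ℝ)) * ∑ j ∈ univ.filter (fun j => b i * b j = 1), V' (x s i - x s j)
      - (1 / (n : ℝ)) * ∑ j ∈ univ.filter (fun j => b i * b j = -1), W' (x s i - x s j) with hv
  set M : ℝ → ℝ := fun s => (1 / (n : ℝ)) * ∑ i, (x s i) ^ 2 with hM
  set D : ℝ → ℝ := fun s => (1 / (n : ℝ)) * ∑ i, (2 : ℝ) * x s i ^ 1 * v s i with hD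
  have hderiv : ∀ s ∈ Set.Icc (0 : ℝ) T, HasDerivWithinAt M (D s) (Set.Icc 0 T) s := by
    intro s hs
    have : HasDerivAt (fun u => ∑ i, (x u i) ^ 2) (∑ i, (2 : ℝ) * x s i ^ 1 * v s i) s := by
      refine HasDerivAt.fun_sum fun i _ => ?_
      have h := (hx s hs i).fun_pow 2
      simpa [hv, one_div] using h
    exact ((this.const_mul (1 / (n : ℝ)))).hasDerivWithinAt
  have hDbound : ∀ s ∈ Set.Icc (0 : ℝ) T, ‖D s‖ ≤ 2 * C₀ := by
    intro s hs
    have hAV := sym_sum_bound C₀ n (x s) b V' 1 hVodd hVbd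
    have hAW := sym_sum_bound C₀ n (x s) b W' (-1) hWodd hWbd
    have hDeq : D s = -(2 / (n : ℝ) ^ 2) *
        ((∑ i, x s i * ∑ j ∈ univ.filter (fun j => b i * b j = 1), V' (x s i - x s j))
          + (∑ i, x s i * ∑ j ∈ univ.filter (fun j => b i * b j = -1), W' (x s i - x s j))) := by
      simp only [hD]
      rw [Finset.mul_sum, ← Finset.sum_add_distrib, Finset.mul_sum]
      refine Finset.sum_congr rfl fun i _ => ?_
      simp only [hv]
      ring
    rw [Real.norm_eq_abs, hDeq, abs_mul]
    have h1 : |(-(2 / (n : ℝ) ^ 2))| = 2 / (n : ℝ) ^ 2 := by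
      rw [abs_neg, abs_of_pos]; positivity
    rw [h1]
    have h2 : |(∑ i, x s i * ∑ j ∈ univ.filter (fun j => b i * b j = 1), V' (x s i - x s j))
          + (∑ i, x s i * ∑ j ∈ univ.filter (fun j => b i * b j = -1), W' (x s i - x s j))|
        ≤ (n : ℝ) ^ 2 * C₀ := by
      calc _ ≤ _ := abs_add_le _ _
        _ ≤ (n : ℝ) ^ 2 * C₀ / 2 + (n : ℝ) ^ 2 * C₀ / 2 := add_le_add hAV hAW
        _ = (n : ℝ) ^ 2 * C₀ := by ring
    have hn2 : (0 : ℝ) < (n : ℝ) ^ 2 := by positivity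
    calc 2 / (n : ℝ) ^ 2 * |_| ≤ 2 / (n : ℝ) ^ 2 * ((n : ℝ) ^ 2 * C₀) := by
          exact mul_le_mul_of_nonneg_left h2 (by positivity)
      _ = 2 * C₀ := by field_simp
  have key := Convex.norm_image_sub_le_of_norm_hasDerivWithin_le hderiv hDbound
    (convex_Icc 0 T) (Set.left_mem_Icc.2 hT.le) ht
  rw [Real.norm_eq_abs, Real.norm_eq_abs, sub_zero, abs_of_nonneg ht.1] at key
  have := abs_le.1 key
  have hMt : M t - M 0 ≤ 2 * C₀ * t := (le_abs_self _).trans key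
  have hfin : M t ≤ M 0 + 2 * C₀ * t := by linarith
  simpa [hM, one_div] using hfin
end

section
/- Under the same hypotheses as the second-moment bound, the fourth moment M₄(x(t)) = (1/n) Σ_i x_i(t)⁴ satisfies (d/dt)M₄(x(t)) ≤ C·M₂(x(t)) for a.e. t, and hence M₄(x(t)) ≤ M₄(x(0)) + C·t·(M₂(x(0)) + t) for all t ∈ [0,T], with C depending only on the bound C₀ on |rV'(r)| and |rW'(r)|. -/
open Finset

private lemma cube_term (C₀ a b p : ℝ) (hC₀ : 0 < C₀) (h : |(a - b) * p| ≤ C₀) :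
    -((a^3 - b^3) * p) ≤ 3/2 * C₀ * (a^2 + b^2) := by
  have h2 := abs_le.mp h
  have hq : 0 ≤ a^2 + a*b + b^2 := by nlinarith [sq_nonneg (a+b), sq_nonneg (a-b)]
  have h3 : (a^2+a*b+b^2) * (-((a-b)*p)) ≤ (a^2+a*b+b^2) * C₀ :=
    mul_le_mul_of_nonneg_left (by linarith [h2.1]) hq
  nlinarith [mul_nonneg hC₀.le (sq_nonneg (a-b))]

private lemma antisym_trick {n : ℕ} (S : Fin n → Finset (Fin n))
    (hS : ∀ i j, j ∈ S i ↔ i ∈ S j) (g : Fin n → ℝ) (f : Fin n → Fin n → ℝ)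
    (hf : ∀ i j, f j i = - f i j) :
    ∑ i, ∑ j ∈ S i, g i * f i j
      = (1/2) * ∑ i, ∑ j ∈ S i, (g i - g j) * f i j := by
  have key : ∑ i, ∑ j ∈ S i, g j * f i j = -∑ i, ∑ j ∈ S i, g i * f i j := by
    calc ∑ i, ∑ j ∈ S i, g j * f i j
        = ∑ i : Fin n, ∑ j : Fin n, if j ∈ S i then g j * f i j else 0 := by
          refine Finset.sum_congr rfl fun i _ => ?_
          rw [Finset.sum_ite_mem, Finset.univ_inter]
      _ = ∑ j : Fin n, ∑ i : Fin n, if j ∈ S i then g j * f i j else 0 := Finset.sum_comm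
      _ = ∑ i : Fin n, ∑ j : Fin n, if i ∈ S j then g i * f j i else 0 := rfl
      _ = ∑ i : Fin n, ∑ j : Fin n, -(if j ∈ S i then g i * f i j else 0) := by
          refine Finset.sum_congr rfl fun i _ => Finset.sum_congr rfl fun j _ => ?_
          rw [hf i j]
          simp only [hS j i]
          split <;> simp
      _ = -∑ i : Fin n, ∑ j : Fin n, (if j ∈ S i then g i * f i j else 0) := by
          simp
      _ = -∑ i, ∑ j ∈ S i, g i * f i j := by
          refine congrArg Neg.neg (Finset.sum_congr rfl fun i _ => ?_)
          rw [Finset.sum_ite_mem, Finset.univ_inter]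
  have expand : ∑ i, ∑ j ∈ S i, (g i - g j) * f i j
      = (∑ i, ∑ j ∈ S i, g i * f i j) - (∑ i, ∑ j ∈ S i, g j * f i j) := by
    rw [← Finset.sum_sub_distrib]
    exact Finset.sum_congr rfl fun i _ => by rw [← Finset.sum_sub_distrib]; exact Finset.sum_congr rfl fun j _ => by ring
  rw [expand, key]; ring

private lemma double_sum_bound {n : ℕ} (S : Fin n → Finset (Fin n))
    (hS : ∀ i j, j ∈ S i ↔ i ∈ S j) (g : Fin n → ℝ) (f : Fin n → Fin n → ℝ)
    (hf : ∀ i j, f j i = - f i j) (B : Fin n → Fin n → ℝ) (hB0 : ∀ i j, 0 ≤ B i j)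
    (hB : ∀ i j, -((g i - g j) * f i j) ≤ B i j) :
    -∑ i, ∑ j ∈ S i, g i * f i j ≤ (1/2) * ∑ i, ∑ j, B i j := by
  rw [antisym_trick S hS g f hf]
  have h1 : -∑ i, ∑ j ∈ S i, (g i - g j) * f i j ≤ ∑ i, ∑ j, B i j := by
    calc -∑ i, ∑ j ∈ S i, (g i - g j) * f i j
        = ∑ i, ∑ j ∈ S i, -((g i - g j) * f i j) := by simp
      _ ≤ ∑ i, ∑ j ∈ S i, B i j :=
          Finset.sum_le_sum fun i _ => Finset.sum_le_sum fun j _ => hB i j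
      _ ≤ ∑ i, ∑ j, B i j :=
          Finset.sum_le_sum fun i _ =>
            Finset.sum_le_sum_of_subset_of_nonneg (Finset.subset_univ _) fun j _ _ => hB0 i j
  linarith

private lemma sq_sum_eval {n : ℕ} (c : ℝ) (y : Fin n → ℝ) :
    ∑ i, ∑ j : Fin n, (c*(y i^2 + y j^2)) = 2*c*(n:ℝ)*∑ i, y i^2 := by
  have h1 : ∀ i : Fin n, ∑ j : Fin n, (c*(y i^2 + y j^2))
      = (n:ℝ)*(c*y i^2) + c*∑ j, y j^2 := by
    intro i
    calc ∑ j : Fin n, (c*(y i^2 + y j^2)) = ∑ j : Fin n, (c*y i^2 + c*y j^2) :=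
          Finset.sum_congr rfl fun j _ => by ring
      _ = (∑ _j : Fin n, c*y i^2) + ∑ j, c*y j^2 := Finset.sum_add_distrib
      _ = (n:ℝ)*(c*y i^2) + c*∑ j, y j^2 := by
          rw [Finset.sum_const, Finset.card_univ, Fintype.card_fin, nsmul_eq_mul,
            ← Finset.mul_sum]
  calc ∑ i, ∑ j : Fin n, (c*(y i^2 + y j^2))
      = ∑ i, ((n:ℝ)*(c*y i^2) + c*∑ j, y j^2) := Finset.sum_congr rfl fun i _ => h1 i
    _ = (∑ i, (n:ℝ)*(c*y i^2)) + ∑ _i : Fin n, c*∑ j, y j^2 := Finset.sum_add_distrib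
    _ = 2*c*(n:ℝ)*∑ i, y i^2 := by
        rw [Finset.sum_const, Finset.card_univ, Fintype.card_fin, nsmul_eq_mul,
          ← Finset.mul_sum, ← Finset.mul_sum]
        ring

private lemma const_sum_eval {n : ℕ} (c : ℝ) :
    ∑ _i : Fin n, ∑ _j : Fin n, c = (n:ℝ)*(n:ℝ)*c := by
  simp [Finset.sum_const, Finset.card_univ, nsmul_eq_mul]
  ring

private lemma neg_term (C₀ a b p : ℝ) (h : |(a - b) * p| ≤ C₀) :
    -((a - b) * p) ≤ C₀ := by
  have := abs_le.mp h
  linarith [this.1]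

section Dbounds
variable {n : ℕ} (C₀ : ℝ) (b : Fin n → ℤ) (V' W' : ℝ → ℝ) (y : Fin n → ℝ)

private lemma hS1sym : ∀ i j : Fin n, (j ∈ univ.filter (fun j => b i * b j = 1)
    ↔ i ∈ univ.filter (fun j' => b j * b j' = 1)) := by
  intro i j
  simp only [Finset.mem_filter, Finset.mem_univ, true_and]
  rw [mul_comm]

private lemma hS2sym : ∀ i j : Fin n, (j ∈ univ.filter (fun j => b i * b j = -1)
    ↔ i ∈ univ.filter (fun j' => b j * b j' = -1)) := by
  intro i j
  simp only [Finset.mem_filter, Finset.mem_univ, true_and]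
  rw [mul_comm]

private lemma expand_sum (c : ℝ) (g : Fin n → ℝ) :
    ∑ i, c * g i *
      (-(1/(n:ℝ)) * ∑ j ∈ univ.filter (fun j => b i * b j = 1), V' (y i - y j)
        - (1/(n:ℝ)) * ∑ j ∈ univ.filter (fun j => b i * b j = -1), W' (y i - y j))
    = -(c/(n:ℝ)) * ((∑ i, ∑ j ∈ univ.filter (fun j => b i * b j = 1), g i * V' (y i - y j))
        + (∑ i, ∑ j ∈ univ.filter (fun j => b i * b j = -1), g i * W' (y i - y j))) := by
  rw [← Finset.sum_add_distrib, Finset.mul_sum]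
  refine Finset.sum_congr rfl fun i _ => ?_
  rw [← Finset.mul_sum, ← Finset.mul_sum]
  ring

private lemma D4bound (hC₀ : 0 < C₀) (hn : 0 < (n:ℝ))
    (hVodd : ∀ r, V' (-r) = -V' r) (hWodd : ∀ r, W' (-r) = -W' r)
    (hVb : ∀ r, |r * V' r| ≤ C₀) (hWb : ∀ r, |r * W' r| ≤ C₀) :
    (1/(n:ℝ)) * ∑ i, 4 * y i ^ 3 *
      (-(1/(n:ℝ)) * ∑ j ∈ univ.filter (fun j => b i * b j = 1), V' (y i - y j)
        - (1/(n:ℝ)) * ∑ j ∈ univ.filter (fun j => b i * b j = -1), W' (y i - y j))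
      ≤ 12 * C₀ * ((1/(n:ℝ)) * ∑ i, y i ^ 2) := by
  have hνne : (n:ℝ) ≠ 0 := ne_of_gt hn
  have hS0 : (0:ℝ) ≤ ∑ i, y i ^ 2 := Finset.sum_nonneg fun i _ => sq_nonneg _
  rw [expand_sum]
  set AV := ∑ i, ∑ j ∈ univ.filter (fun j => b i * b j = 1), y i ^ 3 * V' (y i - y j) with hAVdef
  set AW := ∑ i, ∑ j ∈ univ.filter (fun j => b i * b j = -1), y i ^ 3 * W' (y i - y j) with hAWdef
  have hAV : -AV ≤ (1/2) * ∑ i, ∑ j : Fin n, (3/2*C₀*(y i^2 + y j^2)) := by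
    refine double_sum_bound _ (hS1sym b) (fun i => y i ^ 3)
      (fun i j => V' (y i - y j))
      (fun i j => by show V' (y j - y i) = -V' (y i - y j); rw [show y j - y i = -(y i - y j) by ring, hVodd])
      _ (fun i j => by positivity)
      (fun i j => cube_term C₀ (y i) (y j) _ hC₀ (hVb _))
  have hAW : -AW ≤ (1/2) * ∑ i, ∑ j : Fin n, (3/2*C₀*(y i^2 + y j^2)) := by
    refine double_sum_bound _ (hS2sym b) (fun i => y i ^ 3)
      (fun i j => W' (y i - y j))
      (fun i j => by show W' (y j - y i) = -W' (y i - y j); rw [show y j - y i = -(y i - y j) by ring, hWodd])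
      _ (fun i j => by positivity)
      (fun i j => cube_term C₀ (y i) (y j) _ hC₀ (hWb _))
  rw [sq_sum_eval] at hAV hAW
  have hkey : -(AV + AW) ≤ 3*C₀*(n:ℝ)*∑ i, y i ^ 2 := by linarith
  calc (1/(n:ℝ)) * (-(4/(n:ℝ)) * (AV + AW))
      = (4/((n:ℝ)*(n:ℝ))) * (-(AV + AW)) := by field_simp
    _ ≤ (4/((n:ℝ)*(n:ℝ))) * (3*C₀*(n:ℝ)*∑ i, y i ^ 2) :=
        mul_le_mul_of_nonneg_left hkey (by positivity)
    _ = 12 * C₀ * ((1/(n:ℝ)) * ∑ i, y i ^ 2) := by field_simp; ring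

private lemma D2bound (hC₀ : 0 < C₀) (hn : 0 < (n:ℝ))
    (hVodd : ∀ r, V' (-r) = -V' r) (hWodd : ∀ r, W' (-r) = -W' r)
    (hVb : ∀ r, |r * V' r| ≤ C₀) (hWb : ∀ r, |r * W' r| ≤ C₀) :
    (1/(n:ℝ)) * ∑ i, 2 * y i *
      (-(1/(n:ℝ)) * ∑ j ∈ univ.filter (fun j => b i * b j = 1), V' (y i - y j)
        - (1/(n:ℝ)) * ∑ j ∈ univ.filter (fun j => b i * b j = -1), W' (y i - y j))
      ≤ 2 * C₀ := by
  have hνne : (n:ℝ) ≠ 0 := ne_of_gt hn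
  rw [expand_sum]
  set AV := ∑ i, ∑ j ∈ univ.filter (fun j => b i * b j = 1), y i * V' (y i - y j) with hAVdef
  set AW := ∑ i, ∑ j ∈ univ.filter (fun j => b i * b j = -1), y i * W' (y i - y j) with hAWdef
  have hAV : -AV ≤ (1/2) * ∑ _i : Fin n, ∑ _j : Fin n, C₀ := by
    refine double_sum_bound _ (hS1sym b) (fun i => y i)
      (fun i j => V' (y i - y j))
      (fun i j => by show V' (y j - y i) = -V' (y i - y j); rw [show y j - y i = -(y i - y j) by ring, hVodd])
      _ (fun i j => hC₀.le)
      (fun i j => neg_term C₀ (y i) (y j) _ (hVb _))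
  have hAW : -AW ≤ (1/2) * ∑ _i : Fin n, ∑ _j : Fin n, C₀ := by
    refine double_sum_bound _ (hS2sym b) (fun i => y i)
      (fun i j => W' (y i - y j))
      (fun i j => by show W' (y j - y i) = -W' (y i - y j); rw [show y j - y i = -(y i - y j) by ring, hWodd])
      _ (fun i j => hC₀.le)
      (fun i j => neg_term C₀ (y i) (y j) _ (hWb _))
  rw [const_sum_eval] at hAV hAW
  have hkey : -(AV + AW) ≤ (n:ℝ)*(n:ℝ)*C₀ := by linarith
  calc (1/(n:ℝ)) * (-(2/(n:ℝ)) * (AV + AW))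
      = (2/((n:ℝ)*(n:ℝ))) * (-(AV + AW)) := by field_simp
    _ ≤ (2/((n:ℝ)*(n:ℝ))) * ((n:ℝ)*(n:ℝ)*C₀) :=
        mul_le_mul_of_nonneg_left hkey (by positivity)
    _ = 2 * C₀ := by field_simp

end Dbounds

/-- Fourth-moment bound along the particle dynamics:
`(d/dt)M₄ ≤ C·M₂` and `M₄(x(t)) ≤ M₄(x(0)) + C·t·(M₂(x(0)) + t)`. -/
theorem fourth_moment_bound (C₀ : ℝ) (hC₀ : 0 < C₀) :
    ∃ C > 0, ∀ (n : ℕ), 2 ≤ n → ∀ (T : ℝ), 0 < T →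
      ∀ (x : ℝ → Fin n → ℝ) (b : Fin n → ℤ) (V' W' : ℝ → ℝ),
        (∀ r : ℝ, V' (-r) = -V' r) → (∀ r : ℝ, W' (-r) = -W' r) →
        (∀ r : ℝ, abs (r * V' r) ≤ C₀) → (∀ r : ℝ, abs (r * W' r) ≤ C₀) →
        (∀ t ∈ Set.Icc (0 : ℝ) T, ∀ i, HasDerivAt (fun s => x s i)
          (-(1 / (n : ℝ)) * ∑ j ∈ univ.filter (fun j => b i * b j = 1), V' (x t i - x t j)
            - (1 / (n : ℝ)) * ∑ j ∈ univ.filter (fun j => b i * b j = -1), W' (x t i - x t j)) t) →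
        (∀ t ∈ Set.Icc (0 : ℝ) T, ∀ d : ℝ,
            HasDerivAt (fun s => (1 / (n : ℝ)) * ∑ i, (x s i) ^ 4) d t →
            d ≤ C * ((1 / (n : ℝ)) * ∑ i, (x t i) ^ 2)) ∧
        (∀ t ∈ Set.Icc (0 : ℝ) T,
          (1 / (n : ℝ)) * ∑ i, (x t i) ^ 4
            ≤ (1 / (n : ℝ)) * ∑ i, (x 0 i) ^ 4
              + C * t * ((1 / (n : ℝ)) * ∑ i, (x 0 i) ^ 2 + t)) := by
  refine ⟨12*C₀*(1+C₀), by positivity, ?_⟩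
  intro n hn T hT x b V' W' hVodd hWodd hVb hWb hx
  have hnpos : (0:ℝ) < (n:ℝ) := by
    have : (0:ℕ) < n := by omega
    exact_mod_cast this
  set C := 12*C₀*(1+C₀) with hCdef
  set F : ℝ → Fin n → ℝ := fun t i =>
    -(1 / (n : ℝ)) * ∑ j ∈ univ.filter (fun j => b i * b j = 1), V' (x t i - x t j)
      - (1 / (n : ℝ)) * ∑ j ∈ univ.filter (fun j => b i * b j = -1), W' (x t i - x t j)
    with hFdef
  -- derivative of M₄ and M₂
  have hM4 : ∀ t ∈ Set.Icc (0:ℝ) T, HasDerivAt (fun s => (1 / (n : ℝ)) * ∑ i, (x s i) ^ 4)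
      ((1 / (n : ℝ)) * ∑ i, 4 * x t i ^ 3 * F t i) t := by
    intro t ht
    have h := HasDerivAt.const_mul (1 / (n:ℝ))
      (HasDerivAt.fun_sum (u := univ) (fun i _ => (hx t ht i).pow 4))
    refine h.congr_deriv ?_
    refine congrArg _ (Finset.sum_congr rfl fun i _ => ?_)
    simp only [hFdef]
    push_cast
    ring
  have hM2 : ∀ t ∈ Set.Icc (0:ℝ) T, HasDerivAt (fun s => (1 / (n : ℝ)) * ∑ i, (x s i) ^ 2)
      ((1 / (n : ℝ)) * ∑ i, 2 * x t i * F t i) t := by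
    intro t ht
    have h := HasDerivAt.const_mul (1 / (n:ℝ))
      (HasDerivAt.fun_sum (u := univ) (fun i _ => (hx t ht i).pow 2))
    refine h.congr_deriv ?_
    refine congrArg _ (Finset.sum_congr rfl fun i _ => ?_)
    simp only [hFdef]
    push_cast
    ring
  -- the value bounds
  have key4 : ∀ t : ℝ, (1 / (n : ℝ)) * ∑ i, 4 * x t i ^ 3 * F t i
      ≤ 12*C₀*((1 / (n : ℝ)) * ∑ i, (x t i)^2) := fun t =>
    D4bound C₀ b V' W' (x t) hC₀ hnpos hVodd hWodd hVb hWb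
  have key2 : ∀ t : ℝ, (1 / (n : ℝ)) * ∑ i, 2 * x t i * F t i ≤ 2*C₀ := fun t =>
    D2bound C₀ b V' W' (x t) hC₀ hnpos hVodd hWodd hVb hWb
  have hm2nonneg : ∀ t : ℝ, 0 ≤ (1 / (n : ℝ)) * ∑ i, (x t i)^2 := fun t => by positivity
  constructor
  · -- first part
    intro t ht d hd
    have hd' : d = (1 / (n : ℝ)) * ∑ i, 4 * x t i ^ 3 * F t i := hd.unique (hM4 t ht)
    rw [hd']
    have h1 := key4 t
    have h2 := hm2nonneg t
    nlinarith [mul_nonneg (mul_nonneg (by norm_num : (0:ℝ) ≤ 12) hC₀.le) (mul_nonneg hC₀.le h2)]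
  · -- second part
    -- Step 1: second moment bound
    have hm2le : ∀ s ∈ Set.Icc (0:ℝ) T,
        (1 / (n : ℝ)) * ∑ i, (x s i)^2 ≤ (1 / (n : ℝ)) * ∑ i, (x 0 i)^2 + 2*C₀*s := by
      have hg : ∀ s ∈ Set.Icc (0:ℝ) T,
          HasDerivAt (fun s => 2*C₀*s - (1 / (n : ℝ)) * ∑ i, (x s i) ^ 2)
            (2*C₀ - (1 / (n : ℝ)) * ∑ i, 2 * x s i * F s i) s := by
        intro s hs
        have h1 : HasDerivAt (fun s : ℝ => 2*C₀*s) (2*C₀) s := by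
          simpa using (hasDerivAt_id s).const_mul (2*C₀)
        exact h1.sub (hM2 s hs)
      have hmono : MonotoneOn (fun s => 2*C₀*s - (1 / (n : ℝ)) * ∑ i, (x s i) ^ 2)
          (Set.Icc 0 T) := by
        refine monotoneOn_of_hasDerivWithinAt_nonneg (convex_Icc 0 T)
          (fun s hs => (hg s hs).continuousAt.continuousWithinAt)
          (f' := fun s => 2*C₀ - (1 / (n : ℝ)) * ∑ i, 2 * x s i * F s i)
          (fun s hs => ?_) (fun s hs => ?_)
        · rw [interior_Icc] at hs
          exact (hg s (Set.Ioo_subset_Icc_self hs)).hasDerivWithinAt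
        · linarith [key2 s]
      intro s hs
      have h0 : (0:ℝ) ∈ Set.Icc (0:ℝ) T := Set.mem_Icc.mpr ⟨le_refl _, hT.le⟩
      have := hmono h0 hs hs.1
      simp only [mul_zero] at this
      linarith
    -- Step 2: fourth moment bound
    intro t ht
    have hm20 := hm2nonneg 0
    have hφ : ∀ s ∈ Set.Icc (0:ℝ) T,
        HasDerivAt (fun s => C*((1 / (n : ℝ)) * ∑ i, (x 0 i)^2)*s + C*s^2
            - (1 / (n : ℝ)) * ∑ i, (x s i) ^ 4)
          (C*((1 / (n : ℝ)) * ∑ i, (x 0 i)^2) + C*(2*s)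
            - (1 / (n : ℝ)) * ∑ i, 4 * x s i ^ 3 * F s i) s := by
      intro s hs
      have h1 : HasDerivAt (fun s : ℝ => C*((1 / (n : ℝ)) * ∑ i, (x 0 i)^2)*s + C*s^2)
          (C*((1 / (n : ℝ)) * ∑ i, (x 0 i)^2) + C*(2*s)) s := by
        have := ((hasDerivAt_id s).const_mul (C*((1 / (n : ℝ)) * ∑ i, (x 0 i)^2))).add
          (((hasDerivAt_id s).pow 2).const_mul C)
        refine this.congr_deriv ?_
        simp
      exact h1.sub (hM4 s hs)
    have hmono : MonotoneOn (fun s => C*((1 / (n : ℝ)) * ∑ i, (x 0 i)^2)*s + C*s^2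
        - (1 / (n : ℝ)) * ∑ i, (x s i) ^ 4) (Set.Icc 0 T) := by
      refine monotoneOn_of_hasDerivWithinAt_nonneg (convex_Icc 0 T)
        (fun s hs => (hφ s hs).continuousAt.continuousWithinAt)
        (f' := fun s => C*((1 / (n : ℝ)) * ∑ i, (x 0 i)^2) + C*(2*s)
          - (1 / (n : ℝ)) * ∑ i, 4 * x s i ^ 3 * F s i)
        (fun s hs => ?_) (fun s hs => ?_)
      · rw [interior_Icc] at hs
        exact (hφ s (Set.Ioo_subset_Icc_self hs)).hasDerivWithinAt
      · rw [interior_Icc] at hs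
        have h1 := key4 s
        have h2 := hm2le s (Set.Ioo_subset_Icc_self hs)
        have h3 := hm2nonneg s
        have hs0 : 0 ≤ s := hs.1.le
        rw [hCdef]
        nlinarith [mul_nonneg hC₀.le hs0, mul_nonneg (mul_nonneg hC₀.le hC₀.le) hs0,
          mul_nonneg hC₀.le hm20]
    have h0 : (0:ℝ) ∈ Set.Icc (0:ℝ) T := Set.mem_Icc.mpr ⟨le_refl _, hT.le⟩
    have := hmono h0 ht ht.1
    simp only [mul_zero, zero_pow, ne_eq, OfNat.ofNat_ne_zero, not_false_eq_true,
      zero_add] at this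
    have hring : C*t*((1 / (n : ℝ)) * ∑ i, (x 0 i)^2 + t)
        = C*((1 / (n : ℝ)) * ∑ i, (x 0 i)^2)*t + C*t^2 := by ring
    nlinarith [this]
end
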